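/- Let A be a finite-dimensional commutative unital algebra over ℂ, let a ∈ A, and let λ ∈ ℂ be an eigenvalue of the multiplication map L_a : A → A whose algebraic multiplicity is one. Then any eigenvector ψ of L_a with eigenvalue λ satisfies ψ·ψ = c • ψ for some nonzero c ∈ ℂ; in particular, after rescaling, ψ is a nonzero idempotent of A. -/
import Mathlib


/-- Let `A` be a finite-dimensional commutative unital `ℂ`-algebra, `a ∈ A`,
and `λ` an eigenvalue of the multiplication map `L_a : A → A` of algebraic
multiplicity one (i.e. with one-dimensional generalized eigenspace). Then any
eigenvector `ψ` of `L_a` with eigenvalue `λ` satisfies `ψ·ψ = c • ψ` for some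
nonzero `c ∈ ℂ`; in particular `c⁻¹ • ψ` is a nonzero idempotent. -/
theorem eigenvector_mul_self_of_multiplicity_one
    {A : Type*} [CommRing A] [Algebra ℂ A] [FiniteDimensional ℂ A]
    (a : A) (lam : ℂ)
    (hmult : Module.finrank ℂ
      (Module.End.maxGenEigenspace (LinearMap.mulLeft ℂ a) lam) = 1)
    (ψ : A) (hψ : ψ ≠ 0) (heig : a * ψ = lam • ψ) :
    ∃ c : ℂ, c ≠ 0 ∧ ψ * ψ = c • ψ ∧ IsIdempotentElem (c⁻¹ • ψ) := by
  set f : Module.End ℂ A := LinearMap.mulLeft ℂ a with hf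
  set g : Module.End ℂ A := f - lam • 1 with hg
  -- ψ is killed by g
  have hgψ : ∀ x : A, g (ψ * x) = 0 := by
    intro x
    simp only [hg, LinearMap.sub_apply, LinearMap.smul_apply, Module.End.one_apply, hf,
      LinearMap.mulLeft_apply]
    rw [← mul_assoc, heig, smul_mul_assoc, sub_self]
  -- get a Fitting exponent m
  obtain ⟨m, hm⟩ := Filter.eventually_atTop.mp
    ((LinearMap.eventually_isCompl_ker_pow_range_pow g).and
      (Filter.eventually_ge_atTop (max 1 (Module.finrank ℂ A))))
  obtain ⟨hcompl, hm1⟩ := hm m le_rfl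
  have hm1' : 1 ≤ m := le_trans (le_max_left _ _) hm1
  have hmfin : Module.finrank ℂ A ≤ m := le_trans (le_max_right _ _) hm1
  -- ker (g ^ m) is the max generalized eigenspace
  have hker : LinearMap.ker (g ^ m) = Module.End.maxGenEigenspace f lam := by
    rw [← Module.End.genEigenspace_nat (k := m)]
    apply le_antisymm
    · exact (Module.End.genEigenspace f lam).monotone le_top
    · rw [Module.End.maxGenEigenspace_eq_genEigenspace_finrank]
      exact (Module.End.genEigenspace f lam).monotone (by exact_mod_cast hmfin)
  -- ψ ∈ ker (g ^ m)
  have hψg : ψ ∈ LinearMap.ker (g ^ m) := by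
    rw [LinearMap.mem_ker, ← Nat.sub_add_cancel hm1', pow_succ, Module.End.mul_apply]
    have : g ψ = 0 := by simpa using hgψ 1
    rw [this, map_zero]
  -- ker (g ^ m) = span ψ
  have hspan : (Submodule.span ℂ {ψ}) = LinearMap.ker (g ^ m) := by
    apply Submodule.eq_of_le_of_finrank_eq
    · rwa [Submodule.span_singleton_le_iff_mem]
    · rw [finrank_span_singleton hψ, hker, hmult]
  -- 1 = t • ψ + (g ^ m) u
  have h1 : (1 : A) ∈ LinearMap.ker (g ^ m) ⊔ LinearMap.range (g ^ m) := by
    rw [hcompl.sup_eq_top]; trivial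
  obtain ⟨k, hk, r, hr, hkr⟩ := Submodule.mem_sup.mp h1
  rw [← hspan] at hk
  obtain ⟨t, rfl⟩ := Submodule.mem_span_singleton.mp hk
  obtain ⟨u, rfl⟩ := hr
  -- ψ * (g ^ m) u = 0
  have hgψ' : ∀ x : A, ψ * g x = 0 := by
    intro x
    simp only [hg, LinearMap.sub_apply, LinearMap.smul_apply, Module.End.one_apply, hf,
      LinearMap.mulLeft_apply]
    rw [mul_sub, mul_smul_comm, mul_left_comm, ← mul_assoc, heig, smul_mul_assoc, sub_self]
  have hzero : ψ * (g ^ m) u = 0 := by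
    rw [← Nat.sub_add_cancel hm1', pow_succ', Module.End.mul_apply]
    exact hgψ' _
  -- ψ = t • (ψ * ψ)
  have hkey : ψ = t • (ψ * ψ) := by
    calc ψ = ψ * (t • ψ + (g ^ m) u) := by rw [hkr, mul_one]
    _ = t • (ψ * ψ) + ψ * (g ^ m) u := by rw [mul_add, mul_smul_comm]
    _ = t • (ψ * ψ) := by rw [hzero, add_zero]
  have ht : t ≠ 0 := by
    rintro rfl
    rw [zero_smul] at hkey
    exact hψ hkey
  refine ⟨t⁻¹, inv_ne_zero ht, ?_, ?_⟩
  · conv_rhs => rw [hkey]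
    rw [smul_smul, inv_mul_cancel₀ ht, one_smul]
  · show (t⁻¹⁻¹ • ψ) * (t⁻¹⁻¹ • ψ) = t⁻¹⁻¹ • ψ
    rw [inv_inv, smul_mul_smul_comm, mul_smul, ← hkey]
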